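/- For every p ∈ (1,2) and all x, y > 0 with x ≠ y, the divided difference (x^{p-1} - y^{p-1})/((p-1)(x - y)) equals (sin((p-1)π)/π) · ∫₀^∞ ∫₀^∞ s^{p-2} / ((t + s + x)(t + s + y)) dt ds. -/

import Mathlib

open MeasureTheory Set Real Filter
set_option maxHeartbeats 1000000

lemma int0 {b u : ℝ} (hb1 : -1 < b) (hb0 : b < 0) (hu : 0 < u) :
    IntegrableOn (fun s : ℝ => s ^ b / (s + u)) (Ioi 0) := by
  have hsplit : Ioi (0:ℝ) = Ioc 0 1 ∪ Ioi 1 := (Ioc_union_Ioi_eq_Ioi zero_le_one).symm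
  rw [hsplit]
  apply IntegrableOn.union
  · -- on Ioc 0 1
    have hbnd : IntegrableOn (fun s : ℝ => s ^ b / u) (Ioc 0 1) := by
      have := (intervalIntegral.intervalIntegrable_rpow' (a := 0) (b := 1) hb1)
      rw [intervalIntegrable_iff_integrableOn_Ioc_of_le zero_le_one] at this
      exact this.div_const u
    apply hbnd.mono' ?_ ?_
    · refine ContinuousOn.aestronglyMeasurable ?_ measurableSet_Ioc
      intro s hs
      exact ((continuousAt_rpow_const s b (Or.inl (ne_of_gt hs.1))).continuousWithinAt).div
        ((continuous_id.add continuous_const).continuousWithinAt)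
        (by have := hs.1; positivity)
    · filter_upwards [ae_restrict_mem measurableSet_Ioc] with s hs
      have h0 : (0:ℝ) < s := hs.1
      rw [Real.norm_eq_abs, abs_of_nonneg (by positivity)]
      exact div_le_div_of_nonneg_left (by positivity) hu (by linarith)
  · -- on Ioi 1
    have hbnd : IntegrableOn (fun s : ℝ => s ^ (b - 1)) (Ioi 1) :=
      integrableOn_Ioi_rpow_of_lt (by linarith) one_pos
    apply hbnd.mono' ?_ ?_
    · refine ContinuousOn.aestronglyMeasurable ?_ measurableSet_Ioi
      intro s hs
      have h0 : (0:ℝ) < s := lt_trans one_pos hs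
      exact ((continuousAt_rpow_const s b (Or.inl (ne_of_gt h0))).continuousWithinAt).div
        ((continuous_id.add continuous_const).continuousWithinAt)
        (by positivity)
    · filter_upwards [ae_restrict_mem measurableSet_Ioi] with s hs
      have h0 : (0:ℝ) < s := lt_trans one_pos hs
      rw [Real.norm_eq_abs, abs_of_nonneg (by positivity), Real.rpow_sub h0, Real.rpow_one]
      exact div_le_div_of_nonneg_left (by positivity) h0 (by linarith)

lemma exp_integral {c : ℝ} (hc : 0 < c) :
    ∫ t in Ioi (0:ℝ), Real.exp (-(c * t)) = 1 / c := by
  have h := Real.integral_rpow_mul_exp_neg_mul_Ioi (a := 1) one_pos hc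
  simpa [Real.rpow_zero, Real.rpow_one, Real.Gamma_one] using h

lemma lemA {a u : ℝ} (ha0 : 0 < a) (ha1 : a < 1) (hu : 0 < u) :
    ∫ s in Ioi (0:ℝ), s ^ (a - 1) / (s + u)
      = Real.pi / Real.sin (Real.pi * a) * u ^ (a - 1) := by
  have hb1 : (-1:ℝ) < a - 1 := by linarith
  have hb0 : a - 1 < 0 := by linarith
  set f : ℝ → ℝ → ℝ := fun s t => s ^ (a - 1) * Real.exp (-((s + u) * t)) with hf
  have hmeas : AEStronglyMeasurable (Function.uncurry f)
      ((volume.restrict (Ioi (0:ℝ))).prod (volume.restrict (Ioi (0:ℝ)))) := by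
    rw [Measure.prod_restrict]
    refine ContinuousOn.aestronglyMeasurable ?_ (measurableSet_Ioi.prod measurableSet_Ioi)
    refine ContinuousOn.mul ?_ (Continuous.continuousOn (by fun_prop))
    intro q hq
    exact ((continuousAt_rpow_const q.1 (a-1) (Or.inl (ne_of_gt hq.1))).comp
      continuous_fst.continuousAt).continuousWithinAt
  have hinner : ∀ s : ℝ, 0 < s →
      ∫ t in Ioi (0:ℝ), f s t = s ^ (a - 1) / (s + u) := by
    intro s hs
    have hc : 0 < s + u := by positivity
    simp only [hf]
    rw [integral_const_mul, exp_integral hc, mul_one_div]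
  have hint : Integrable (Function.uncurry f)
      ((volume.restrict (Ioi (0:ℝ))).prod (volume.restrict (Ioi (0:ℝ)))) := by
    rw [integrable_prod_iff hmeas]
    simp only [Function.uncurry_apply_pair]
    constructor
    · filter_upwards [ae_restrict_mem measurableSet_Ioi] with s hs
      have hs' : (0:ℝ) < s := hs
      have hc : 0 < s + u := by positivity
      simp only [hf]
      have h := exp_neg_integrableOn_Ioi 0 hc
      simp only [neg_mul] at h
      exact h.const_mul _
    · have heq : (fun s => ∫ t in Ioi (0:ℝ), ‖f s t‖)
          =ᵐ[volume.restrict (Ioi (0:ℝ))] fun s => s ^ (a - 1) / (s + u) := by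
        filter_upwards [ae_restrict_mem measurableSet_Ioi] with s hs
        have hs' : (0:ℝ) < s := hs
        have h1 : ∀ t, ‖f s t‖ = f s t := fun t => by
          have hnn : 0 ≤ f s t := by
            simp only [hf]; positivity
          rw [Real.norm_eq_abs, abs_of_nonneg hnn]
        simp_rw [h1]
        exact hinner s hs'
      exact (int0 hb1 hb0 hu).congr heq.symm
  have hswap := MeasureTheory.integral_integral_swap hint
  have hL : ∫ s in Ioi (0:ℝ), ∫ t in Ioi (0:ℝ), f s t
      = ∫ s in Ioi (0:ℝ), s ^ (a - 1) / (s + u) := by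
    refine integral_congr_ae ?_
    filter_upwards [ae_restrict_mem measurableSet_Ioi] with s hs
    exact hinner s hs
  have hR : ∫ t in Ioi (0:ℝ), ∫ s in Ioi (0:ℝ), f s t
      = Real.Gamma a * ((1 / u) ^ (1 - a) * Real.Gamma (1 - a)) := by
    have hstep : ∀ t : ℝ, 0 < t → ∫ s in Ioi (0:ℝ), f s t
        = Real.Gamma a * (t ^ ((1 - a) - 1) * Real.exp (-(u * t))) := by
      intro t ht
      have he : ∀ s : ℝ, f s t = (s ^ (a - 1) * Real.exp (-(t * s))) * Real.exp (-(u * t)) := by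
        intro s
        simp only [hf]
        rw [mul_assoc, ← Real.exp_add]
        congr 2
        ring
      simp_rw [he]
      rw [integral_mul_const, Real.integral_rpow_mul_exp_neg_mul_Ioi ha0 ht]
      have h2 : (1 / t) ^ a = t ^ ((1 - a) - 1) := by
        rw [one_div, Real.inv_rpow ht.le, ← Real.rpow_neg ht.le]
        congr 1
        ring
      rw [h2]
      ring
    have h3 : ∫ t in Ioi (0:ℝ), (∫ s in Ioi (0:ℝ), f s t)
        = ∫ t in Ioi (0:ℝ), Real.Gamma a * (t ^ ((1 - a) - 1) * Real.exp (-(u * t))) := by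
      refine integral_congr_ae ?_
      filter_upwards [ae_restrict_mem measurableSet_Ioi] with t ht
      exact hstep t ht
    rw [h3, integral_const_mul,
      Real.integral_rpow_mul_exp_neg_mul_Ioi (by linarith : (0:ℝ) < 1 - a) hu]
  rw [hL, hR] at hswap
  rw [hswap]
  have h1 : (1 / u) ^ (1 - a) = u ^ (a - 1) := by
    rw [one_div, Real.inv_rpow hu.le, ← Real.rpow_neg hu.le]
    congr 1
    ring
  rw [← Real.Gamma_mul_Gamma_one_sub a, h1]
  ring

lemma lemB {A B : ℝ} (hA : 0 < A) (hB : 0 < B) (hAB : A ≠ B) :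
    ∫ t in Ioi (0:ℝ), ((t + A) * (t + B))⁻¹ = (Real.log A - Real.log B) / (A - B) := by
  have hABne : A - B ≠ 0 := sub_ne_zero.2 hAB
  set g : ℝ → ℝ := fun t => (Real.log (t + B) - Real.log (t + A)) * (A - B)⁻¹ with hg
  have hderiv : ∀ t ∈ Ici (0:ℝ), HasDerivAt g (((t + A) * (t + B))⁻¹) t := by
    intro t ht
    have htA : (0:ℝ) < t + A := by have : (0:ℝ) ≤ t := ht; linarith
    have htB : (0:ℝ) < t + B := by have : (0:ℝ) ≤ t := ht; linarith
    have h1 : HasDerivAt (fun t : ℝ => Real.log (t + B)) (1 / (t + B)) t :=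
      HasDerivAt.log ((hasDerivAt_id t).add_const B) (ne_of_gt htB)
    have h2 : HasDerivAt (fun t : ℝ => Real.log (t + A)) (1 / (t + A)) t :=
      HasDerivAt.log ((hasDerivAt_id t).add_const A) (ne_of_gt htA)
    have h3 := (h1.sub h2).mul_const (A - B)⁻¹
    refine h3.congr_deriv ?_
    field_simp
    ring
  have hpos : ∀ t ∈ Ioi (0:ℝ), 0 ≤ ((t + A) * (t + B))⁻¹ := by
    intro t ht
    have : (0:ℝ) < t := ht
    positivity
  have htend : Tendsto g atTop (nhds 0) := by
    have h4 : Tendsto (fun t : ℝ => 1 + (B - A) / (t + A)) atTop (nhds 1) := by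
      have := Tendsto.div_atTop (tendsto_const_nhds (x := B - A))
        (tendsto_atTop_add_const_right atTop A tendsto_id)
      simpa using tendsto_const_nhds.add this
    have h5 : Tendsto (fun t : ℝ => Real.log (1 + (B - A) / (t + A)) * (A - B)⁻¹)
        atTop (nhds 0) := by
      have := ((Real.continuousAt_log one_ne_zero).tendsto.comp h4).mul_const (A - B)⁻¹
      simpa using this
    refine h5.congr' ?_
    filter_upwards [eventually_gt_atTop (0:ℝ)] with t ht
    have htA : (0:ℝ) < t + A := by linarith
    have htB : (0:ℝ) < t + B := by linarith
    have he : 1 + (B - A) / (t + A) = (t + B) / (t + A) := by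
      field_simp
      ring
    rw [he, hg, Real.log_div (ne_of_gt htB) (ne_of_gt htA)]
  have := integral_Ioi_of_hasDerivAt_of_nonneg' hderiv hpos htend
  rw [this, hg]
  simp only [zero_add]
  field_simp
  ring

lemma log_sub_integral {s x y : ℝ} (hs : 0 < s) (hy : 0 < y) (hyx : y < x) :
    ∫ u in Ioc y x, (s + u)⁻¹ = Real.log (s + x) - Real.log (s + y) := by
  rw [← intervalIntegral.integral_of_le hyx.le]
  have hderiv : ∀ u ∈ uIcc y x, HasDerivAt (fun u : ℝ => Real.log (s + u)) ((s + u)⁻¹) u := by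
    intro u hu
    rw [uIcc_of_le hyx.le] at hu
    have hsu : (0:ℝ) < s + u := by have := hu.1; linarith
    have h1 : HasDerivAt (fun u : ℝ => Real.log (s + u)) (1 / (s + u)) u :=
      HasDerivAt.log ((hasDerivAt_id u).const_add s) (ne_of_gt hsu)
    simpa [one_div] using h1
  have hcont : IntervalIntegrable (fun u : ℝ => (s + u)⁻¹) volume y x := by
    refine ContinuousOn.intervalIntegrable ?_
    intro u hu
    rw [uIcc_of_le hyx.le] at hu
    have hsu : (0:ℝ) < s + u := by have := hu.1; linarith
    exact ((continuous_const.add continuous_id).continuousWithinAt).inv₀ (ne_of_gt hsu)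
  rw [intervalIntegral.integral_eq_sub_of_hasDerivAt hderiv hcont]

lemma lemC {p x y : ℝ} (hp1 : 1 < p) (hp2 : p < 2) (hy : 0 < y) (hyx : y < x) :
    ∫ s in Ioi (0:ℝ), s ^ (p - 2) * (Real.log (s + x) - Real.log (s + y))
      = Real.pi / Real.sin (Real.pi * (p - 1)) * ((x ^ (p - 1) - y ^ (p - 1)) / (p - 1)) := by
  have hx : 0 < x := lt_trans hy hyx
  have hb1 : (-1:ℝ) < p - 2 := by linarith
  have hb0 : p - 2 < 0 := by linarith
  set g : ℝ → ℝ → ℝ := fun s u => s ^ (p - 2) * (s + u)⁻¹ with hg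
  have hmeas : AEStronglyMeasurable (Function.uncurry g)
      ((volume.restrict (Ioi (0:ℝ))).prod (volume.restrict (Ioc y x))) := by
    rw [Measure.prod_restrict]
    refine ContinuousOn.aestronglyMeasurable ?_ (measurableSet_Ioi.prod measurableSet_Ioc)
    refine ContinuousOn.mul ?_ ?_
    · intro q hq
      exact ((continuousAt_rpow_const q.1 (p - 2) (Or.inl (ne_of_gt hq.1.out))).comp
        continuous_fst.continuousAt).continuousWithinAt
    · intro q hq
      have h0 : (0:ℝ) < q.1 + q.2 := by
        have h1 : (0:ℝ) < q.1 := hq.1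
        have h2 : y < q.2 := hq.2.1
        linarith
      exact ((continuous_fst.add continuous_snd).continuousWithinAt).inv₀ (ne_of_gt h0)
  -- section integrability in u for fixed s > 0
  have hsec : ∀ s : ℝ, 0 < s → IntegrableOn (fun u => g s u) (Ioc y x) := by
    intro s hs
    have hbnd : IntegrableOn (fun _ : ℝ => s ^ (p - 2) * (s + y)⁻¹) (Ioc y x) :=
      integrableOn_const measure_Ioc_lt_top.ne
    refine hbnd.mono' ?_ ?_
    · refine ContinuousOn.aestronglyMeasurable ?_ measurableSet_Ioc
      refine continuousOn_const.mul ?_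
      intro u hu
      have h0 : (0:ℝ) < s + u := by have := hu.1; linarith
      exact ((continuous_const.add continuous_id).continuousWithinAt).inv₀ (ne_of_gt h0)
    · filter_upwards [ae_restrict_mem measurableSet_Ioc] with u hu
      have hyu : y < u := hu.1
      have h0 : (0:ℝ) < s + u := by linarith
      have hnn : (0:ℝ) ≤ g s u := by simp only [hg]; positivity
      rw [Real.norm_eq_abs, abs_of_nonneg hnn]
      simp only [hg]
      refine mul_le_mul_of_nonneg_left ?_ (by positivity)
      exact inv_anti₀ (by linarith) (by linarith)
  have hint : Integrable (Function.uncurry g)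
      ((volume.restrict (Ioi (0:ℝ))).prod (volume.restrict (Ioc y x))) := by
    rw [integrable_prod_iff hmeas]
    simp only [Function.uncurry_apply_pair]
    constructor
    · filter_upwards [ae_restrict_mem measurableSet_Ioi] with s hs
      exact hsec s hs
    · have hbig : Integrable (fun s : ℝ => s ^ (p - 2) / (s + y) * (x - y))
          (volume.restrict (Ioi (0:ℝ))) := (int0 hb1 hb0 hy).mul_const _
      refine hbig.mono' (hmeas.norm.integral_prod_right') ?_
      filter_upwards [ae_restrict_mem measurableSet_Ioi] with s hs
      have hs' : (0:ℝ) < s := hs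
      have hb2 : ∫ u in Ioc y x, ‖g s u‖ ≤ s ^ (p - 2) / (s + y) * (x - y) := by
        have hle : ∀ u ∈ Ioc y x, ‖g s u‖ ≤ s ^ (p - 2) * (s + y)⁻¹ := by
          intro u hu
          have hyu : y < u := hu.1
          have h0 : (0:ℝ) < s + u := by linarith
          have hnn : (0:ℝ) ≤ g s u := by simp only [hg]; positivity
          rw [Real.norm_eq_abs, abs_of_nonneg hnn]
          simp only [hg]
          refine mul_le_mul_of_nonneg_left ?_ (by positivity)
          exact inv_anti₀ (by linarith) (by linarith)
        calc ∫ u in Ioc y x, ‖g s u‖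
            ≤ ∫ u in Ioc y x, s ^ (p - 2) * (s + y)⁻¹ := by
              refine setIntegral_mono_on ((hsec s hs').norm) ?_ measurableSet_Ioc hle
              exact integrableOn_const measure_Ioc_lt_top.ne
          _ = s ^ (p - 2) / (s + y) * (x - y) := by
              rw [setIntegral_const, Real.volume_real_Ioc_of_le hyx.le,
                smul_eq_mul, div_eq_mul_inv]
              ring
      rw [Real.norm_eq_abs, abs_of_nonneg (integral_nonneg fun u => norm_nonneg _)]
      exact hb2
  have hswap := MeasureTheory.integral_integral_swap hint
  have hL : ∫ s in Ioi (0:ℝ), ∫ u in Ioc y x, g s u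
      = ∫ s in Ioi (0:ℝ), s ^ (p - 2) * (Real.log (s + x) - Real.log (s + y)) := by
    refine integral_congr_ae ?_
    filter_upwards [ae_restrict_mem measurableSet_Ioi] with s hs
    have hs' : (0:ℝ) < s := hs
    simp only [hg]
    rw [integral_const_mul, log_sub_integral hs' hy hyx]
  have hR : ∫ u in Ioc y x, ∫ s in Ioi (0:ℝ), g s u
      = Real.pi / Real.sin (Real.pi * (p - 1)) * ((x ^ (p - 1) - y ^ (p - 1)) / (p - 1)) := by
    have h1 : ∫ u in Ioc y x, (∫ s in Ioi (0:ℝ), g s u)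
        = ∫ u in Ioc y x, Real.pi / Real.sin (Real.pi * (p - 1)) * u ^ (p - 2) := by
      refine integral_congr_ae ?_
      filter_upwards [ae_restrict_mem measurableSet_Ioc] with u hu
      have hu' : (0:ℝ) < u := lt_trans hy hu.1
      have hA := lemA (a := p - 1) (u := u) (by linarith) (by linarith) hu'
      have hpe : p - 1 - 1 = p - 2 := by ring
      rw [hpe] at hA
      simp only [hg]
      simp_rw [← div_eq_mul_inv]
      exact hA
    rw [h1, integral_const_mul, ← intervalIntegral.integral_of_le hyx.le,
      integral_rpow (Or.inl hb1)]
    have h4 : p - 2 + 1 = p - 1 := by ring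
    rw [h4]
  rw [hL, hR] at hswap
  exact hswap

lemma main_aux (p x y : ℝ) (hp1 : 1 < p) (hp2 : p < 2) (hy : 0 < y) (hyx : y < x) :
    (x ^ (p - 1) - y ^ (p - 1)) / ((p - 1) * (x - y)) =
      Real.sin ((p - 1) * Real.pi) / Real.pi *
        ∫ s in Set.Ioi (0 : ℝ), ∫ t in Set.Ioi (0 : ℝ),
          s ^ (p - 2) / ((t + s + x) * (t + s + y)) := by
  have hx : 0 < x := lt_trans hy hyx
  have hinner : ∀ s : ℝ, 0 < s →
      ∫ t in Ioi (0:ℝ), s ^ (p - 2) / ((t + s + x) * (t + s + y))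
        = s ^ (p - 2) * (Real.log (s + x) - Real.log (s + y)) * (x - y)⁻¹ := by
    intro s hs
    have h1 : ∀ t : ℝ, s ^ (p - 2) / ((t + s + x) * (t + s + y))
        = s ^ (p - 2) * ((t + (s + x)) * (t + (s + y)))⁻¹ := by
      intro t
      rw [div_eq_mul_inv, add_assoc, add_assoc]
    simp_rw [h1]
    rw [integral_const_mul, lemB (by positivity) (by positivity)
      (by intro h; exact absurd (by linarith : x = y) (ne_of_gt hyx))]
    have h2 : s + x - (s + y) = x - y := by ring
    rw [h2, div_eq_mul_inv, mul_assoc]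
  have houter : ∫ s in Ioi (0:ℝ), (∫ t in Ioi (0:ℝ),
      s ^ (p - 2) / ((t + s + x) * (t + s + y)))
      = (∫ s in Ioi (0:ℝ), s ^ (p - 2) * (Real.log (s + x) - Real.log (s + y))) * (x - y)⁻¹ := by
    rw [← integral_mul_const]
    refine integral_congr_ae ?_
    filter_upwards [ae_restrict_mem measurableSet_Ioi] with s hs
    exact hinner s hs
  rw [houter, lemC hp1 hp2 hy hyx]
  have hsin : Real.sin (Real.pi * (p - 1)) ≠ 0 := by
    refine ne_of_gt (Real.sin_pos_of_pos_of_lt_pi ?_ ?_)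
    · have := Real.pi_pos; nlinarith
    · have h1 : p - 1 < 1 := by linarith
      have := Real.pi_pos; nlinarith
  have hcomm : Real.sin ((p - 1) * Real.pi) = Real.sin (Real.pi * (p - 1)) := by
    rw [mul_comm]
  rw [hcomm]
  have hπ : Real.pi ≠ 0 := ne_of_gt Real.pi_pos
  have hp1' : p - 1 ≠ 0 := by intro h; linarith [sub_eq_zero.mp h]
  have hxy' : x - y ≠ 0 := sub_ne_zero.2 (ne_of_gt hyx)
  field_simp
  rw [mul_div_assoc, div_self (by rwa [hcomm]), mul_one]

theorem stmt1 (p x y : ℝ) (hp1 : 1 < p) (hp2 : p < 2) (hx : 0 < x) (hy : 0 < y)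
    (hxy : x ≠ y) :
    (x ^ (p - 1) - y ^ (p - 1)) / ((p - 1) * (x - y)) =
      Real.sin ((p - 1) * Real.pi) / Real.pi *
        ∫ s in Set.Ioi (0 : ℝ), ∫ t in Set.Ioi (0 : ℝ),
          s ^ (p - 2) / ((t + s + x) * (t + s + y)) := by
  rcases hxy.lt_or_gt with h | h
  · have hmain := main_aux p y x hp1 hp2 hx h
    have hsym : ∀ t s : ℝ, (t + s + y) * (t + s + x) = (t + s + x) * (t + s + y) :=
      fun t s => mul_comm _ _
    simp_rw [hsym] at hmain
    rw [← hmain]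
    have hp1' : p - 1 ≠ 0 := by intro hh; linarith [sub_eq_zero.mp hh]
    have h1 : x - y ≠ 0 := sub_ne_zero.2 hxy
    have h2 : y - x ≠ 0 := sub_ne_zero.2 hxy.symm
    field_simp
    ring
  · exact main_aux p x y hp1 hp2 hy h
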